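/- Along the constraint curve τ ↦ (τ t, τ^p), the Legendre transform Ψ_p* satisfies d/dτ Ψ_p*(τ t, τ^p) = τ^{p-1} - 1/τ at every τ > 0 where Ψ_p*(τt, τ^p) is finite and the supremum defining it is attained at an interior point. Consequently the map τ ↦ Ψ_p*(τt, τ^p) is minimized at τ = 1. -/

import Mathlib

open Real MeasureTheory

/-- The generalized `p`-th Gaussian density. -/
noncomputable def fp (p : ℝ) (y : ℝ) : ℝ :=
  Real.exp (-|y| ^ p / p) / (2 * p ^ (1/p) * Real.Gamma (1 + 1/p))

/-- The standard Gaussian density. -/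
noncomputable def gauss (u : ℝ) : ℝ := Real.exp (-u ^ 2 / 2) / Real.sqrt (2 * Real.pi)

/-- The log moment generating function of `(Y, |Y|^p)` for `Y` generalized `p`-Gaussian. -/
noncomputable def Lambda (p t₁ t₂ : ℝ) : ℝ :=
  Real.log (∫ y : ℝ, Real.exp (t₁ * y + t₂ * |y| ^ p) * fp p y)

open Set

lemma integrable_of_even {f : ℝ → ℝ} (h : ∀ x, f (-x) = f x)
    (hf : IntegrableOn f (Ici 0)) : Integrable f := by
  rw [← integrableOn_univ, ← Iio_union_Ici (a := (0:ℝ)), integrableOn_union]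
  refine ⟨?_, hf⟩
  rw [← (Measure.measurePreserving_neg (volume : Measure ℝ)).integrableOn_comp_preimage
      (Homeomorph.neg ℝ).measurableEmbedding]
  simp only [Function.comp_def, h, neg_preimage, neg_Iio, neg_zero]
  exact hf.mono_set Ioi_subset_Ici_self

lemma integrable_abs_rpow_mul_gauss {q : ℝ} (hq : 0 ≤ q) :
    Integrable (fun u : ℝ => |u| ^ q * Real.exp (-(1/2) * u ^ 2)) := by
  apply integrable_of_even (fun x => by simp)
  have h := integrableOn_rpow_mul_exp_neg_mul_sq (b := 1/2) (by norm_num) (s := q) (by linarith)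
  rw [← integrableOn_Ici_iff_integrableOn_Ioi] at h
  exact h.congr_fun (fun x hx => by rw [abs_of_nonneg (mem_Ici.mp hx)]) measurableSet_Ici

lemma integrable_exp_neg_abs_rpow {p : ℝ} (hp : 1 ≤ p) {b : ℝ} (hb : 0 < b) :
    Integrable (fun y : ℝ => Real.exp (-b * |y| ^ p)) := by
  apply integrable_of_even (fun x => by simp)
  have h := integrableOn_rpow_mul_exp_neg_mul_rpow (p := p) (s := 0) (by norm_num) (by linarith) hb
  rw [← integrableOn_Ici_iff_integrableOn_Ioi] at h
  refine (h.congr_fun (fun x hx => ?_) measurableSet_Ici)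
  beta_reduce
  rw [Real.rpow_zero, one_mul, abs_of_nonneg (mem_Ici.mp hx)]

lemma Np_pos {p : ℝ} (hp : 0 < p) : 0 < 2 * p ^ (1/p) * Real.Gamma (1 + 1/p) :=
  mul_pos (mul_pos two_pos (rpow_pos_of_pos hp _)) (Real.Gamma_pos_of_pos (by positivity))

lemma fp_pos {p : ℝ} (hp : 0 < p) (y : ℝ) : 0 < fp p y := div_pos (exp_pos _) (Np_pos hp)

lemma cont_abs_rpow {p : ℝ} (hp : 0 < p) : Continuous fun y : ℝ => |y| ^ p :=
  continuous_abs.rpow_const (fun _ => Or.inr hp.le)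

lemma cont_integrand {p : ℝ} (hp : 0 < p) (t₁ t₂ : ℝ) :
    Continuous (fun y : ℝ => Real.exp (t₁ * y + t₂ * |y| ^ p) * fp p y) := by
  unfold fp
  exact ((continuous_const.mul continuous_id).add
      (continuous_const.mul (cont_abs_rpow hp))).rexp.mul
    (((cont_abs_rpow hp).neg.div_const p).rexp.div_const _)

/-- The pointwise exponent bound coming from Young's inequality. -/
lemma exponent_bound {p : ℝ} (hp : 1 < p) {t₂ : ℝ} (ht₂ : t₂ < 1/p) (t₁ y : ℝ) :
    t₁ * y + t₂ * |y| ^ p - |y| ^ p / p ≤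
      (|t₁| / (p * ((1/p - t₂)/2)) ^ (1/p)) ^ (p/(p-1)) / (p/(p-1))
        - ((1/p - t₂)/2) * |y| ^ p := by
  set η : ℝ := (1/p - t₂)/2 with hη
  have hηpos : 0 < η := by rw [hη]; linarith
  have hppos : 0 < p := by linarith
  set δ : ℝ := (p * η) ^ (1/p) with hδ
  have hδpos : 0 < δ := rpow_pos_of_pos (by positivity) _
  have hδp : δ ^ p = p * η := by
    rw [hδ, ← Real.rpow_mul (by positivity), one_div_mul_cancel hppos.ne', Real.rpow_one]
  have hconj : p.HolderConjugate (p/(p-1)) := Real.HolderConjugate.conjExponent hp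
  have hyoung : (δ * |y|) * (|t₁| / δ) ≤ (δ * |y|) ^ p / p + (|t₁| / δ) ^ (p/(p-1)) / (p/(p-1)) :=
    Real.young_inequality_of_nonneg (by positivity) (by positivity) hconj
  have h1 : t₁ * y ≤ (δ * |y|) * (|t₁| / δ) := by
    have he : (δ * |y|) * (|t₁| / δ) = |t₁ * y| := by
      rw [abs_mul]; field_simp
    rw [he]; exact le_abs_self _
  have h2 : (δ * |y|) ^ p = (p * η) * |y| ^ p := by
    rw [Real.mul_rpow hδpos.le (abs_nonneg _), hδp]
  have := h1.trans hyoung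
  rw [h2] at this
  have hq : (p * η) * |y| ^ p / p = η * |y| ^ p := by field_simp
  rw [hq] at this
  have hA : (0:ℝ) ≤ |y| ^ p := Real.rpow_nonneg (abs_nonneg y) p
  have hkey : t₂ * |y| ^ p - |y| ^ p / p = -((η * |y| ^ p) + η * |y| ^ p) := by
    rw [hη]; field_simp; ring
  linarith [this, hkey]

lemma integrand_le {p : ℝ} (hp : 1 < p) {t₂ : ℝ} (ht₂ : t₂ < 1/p) (t₁ y : ℝ) :
    Real.exp (t₁ * y + t₂ * |y| ^ p) * fp p y ≤
      Real.exp ((|t₁| / (p * ((1/p - t₂)/2)) ^ (1/p)) ^ (p/(p-1)) / (p/(p-1)))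
        / (2 * p ^ (1/p) * Real.Gamma (1 + 1/p))
        * Real.exp (-((1/p - t₂)/2) * |y| ^ p) := by
  have hN : 0 < 2 * p ^ (1/p) * Real.Gamma (1 + 1/p) := Np_pos (by linarith)
  unfold fp
  have e1 : t₁ * y + t₂ * |y| ^ p - |y| ^ p / p = (t₁ * y + t₂ * |y| ^ p) + (-|y| ^ p / p) := by ring
  have e2 : (|t₁| / (p * ((1/p - t₂)/2)) ^ (1/p)) ^ (p/(p-1)) / (p/(p-1)) - ((1/p - t₂)/2) * |y| ^ p
      = (|t₁| / (p * ((1/p - t₂)/2)) ^ (1/p)) ^ (p/(p-1)) / (p/(p-1)) + (-((1/p - t₂)/2) * |y| ^ p) := by ring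
  calc Real.exp (t₁ * y + t₂ * |y| ^ p) * (Real.exp (-|y| ^ p / p) / (2 * p ^ (1/p) * Real.Gamma (1 + 1/p)))
      = Real.exp (t₁ * y + t₂ * |y| ^ p - |y| ^ p / p) / (2 * p ^ (1/p) * Real.Gamma (1 + 1/p)) := by
        rw [e1, Real.exp_add (t₁ * y + t₂ * |y| ^ p) (-|y| ^ p / p)]; ring
    _ ≤ Real.exp ((|t₁| / (p * ((1/p - t₂)/2)) ^ (1/p)) ^ (p/(p-1)) / (p/(p-1)) - ((1/p - t₂)/2) * |y| ^ p) / (2 * p ^ (1/p) * Real.Gamma (1 + 1/p)) := by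
        exact (div_le_div_iff_of_pos_right hN).mpr (Real.exp_le_exp.mpr (exponent_bound hp ht₂ t₁ y))
    _ = _ := by rw [e2, Real.exp_add]; ring

lemma integrable_integrand {p : ℝ} (hp : 1 < p) {t₂ : ℝ} (ht₂ : t₂ < 1/p) (t₁ : ℝ) :
    Integrable (fun y : ℝ => Real.exp (t₁ * y + t₂ * |y| ^ p) * fp p y) := by
  have hη : 0 < (1/p - t₂)/2 := by linarith
  apply Integrable.mono'
    ((integrable_exp_neg_abs_rpow hp.le hη).const_mul
      (Real.exp ((|t₁| / (p * ((1/p - t₂)/2)) ^ (1/p)) ^ (p/(p-1)) / (p/(p-1)))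
        / (2 * p ^ (1/p) * Real.Gamma (1 + 1/p))))
    (cont_integrand (by linarith) t₁ t₂).aestronglyMeasurable
  refine Filter.Eventually.of_forall (fun y => ?_)
  rw [Real.norm_of_nonneg (mul_nonneg (Real.exp_pos _).le (fp_pos (by linarith : (0:ℝ) < p) y).le)]
  exact integrand_le hp ht₂ t₁ y

lemma Z_pos {p : ℝ} (hp : 1 < p) {t₂ : ℝ} (ht₂ : t₂ < 1/p) (t₁ : ℝ) :
    0 < ∫ y : ℝ, Real.exp (t₁ * y + t₂ * |y| ^ p) * fp p y := by
  rw [integral_pos_iff_support_of_nonneg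
    (fun y => mul_nonneg (exp_pos _).le (fp_pos (by linarith) y).le)
    (integrable_integrand hp ht₂ t₁)]
  have : Function.support (fun y : ℝ => Real.exp (t₁ * y + t₂ * |y| ^ p) * fp p y) = Set.univ :=
    Set.eq_univ_of_forall (fun y => (mul_pos (exp_pos _) (fp_pos (by linarith) y)).ne')
  rw [this]
  simp

lemma M_pos {p : ℝ} (hp : 1 < p) {η : ℝ} (hη : 0 < η) :
    0 < ∫ y : ℝ, Real.exp (-η * |y| ^ p) := by
  rw [integral_pos_iff_support_of_nonneg (fun y => (Real.exp_pos _).le)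
    (integrable_exp_neg_abs_rpow hp.le hη)]
  have : Function.support (fun y : ℝ => Real.exp (-η * |y| ^ p)) = Set.univ :=
    Set.eq_univ_of_forall (fun y => (Real.exp_pos _).ne')
  rw [this]; simp

lemma Lambda_upper {p : ℝ} (hp : 1 < p) {t₂ : ℝ} (ht₂ : t₂ < 1/p) (t₁ : ℝ) :
    Lambda p t₁ t₂ ≤ (|t₁| / (p * ((1/p - t₂)/2)) ^ (1/p)) ^ (p/(p-1)) / (p/(p-1))
      + Real.log ((∫ y : ℝ, Real.exp (-((1/p - t₂)/2) * |y| ^ p))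
          / (2 * p ^ (1/p) * Real.Gamma (1 + 1/p))) := by
  have hppos : (0:ℝ) < p := by linarith
  have hη : 0 < (1/p - t₂)/2 := by linarith
  have hN : 0 < 2 * p ^ (1/p) * Real.Gamma (1 + 1/p) := Np_pos hppos
  have hM := M_pos hp hη (p := p)
  set K := (|t₁| / (p * ((1/p - t₂)/2)) ^ (1/p)) ^ (p/(p-1)) / (p/(p-1)) with hK
  have hle : (∫ y : ℝ, Real.exp (t₁ * y + t₂ * |y| ^ p) * fp p y)
      ≤ Real.exp K / (2 * p ^ (1/p) * Real.Gamma (1 + 1/p))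
        * ∫ y : ℝ, Real.exp (-((1/p - t₂)/2) * |y| ^ p) := by
    rw [← integral_const_mul]
    exact integral_mono (integrable_integrand hp ht₂ t₁)
      (((integrable_exp_neg_abs_rpow hp.le hη)).const_mul _) (integrand_le hp ht₂ t₁)
  have hlog := Real.log_le_log (Z_pos hp ht₂ t₁) hle
  unfold Lambda
  rw [show Real.exp K / (2 * p ^ (1/p) * Real.Gamma (1 + 1/p))
        * ∫ y : ℝ, Real.exp (-((1/p - t₂)/2) * |y| ^ p)
      = Real.exp K * ((∫ y : ℝ, Real.exp (-((1/p - t₂)/2) * |y| ^ p))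
          / (2 * p ^ (1/p) * Real.Gamma (1 + 1/p))) by ring,
    Real.log_mul (Real.exp_ne_zero _) (div_pos hM hN).ne', Real.log_exp] at hlog
  exact hlog

lemma Lambda_lower {p : ℝ} (hp : 1 < p) {t₂ : ℝ} (ht₂ : t₂ < 1/p) (t₁ : ℝ) :
    Real.log (2 * Real.exp (-(1/p)) / (2 * p ^ (1/p) * Real.Gamma (1 + 1/p))) - |t₂| - |t₁|
      ≤ Lambda p t₁ t₂ := by
  have hppos : (0:ℝ) < p := by linarith
  have hN : 0 < 2 * p ^ (1/p) * Real.Gamma (1 + 1/p) := Np_pos hppos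
  set c := Real.exp (-(|t₁| + |t₂|)) * (Real.exp (-(1/p)) / (2 * p ^ (1/p) * Real.Gamma (1 + 1/p))) with hc
  have hcpos : 0 < c := by positivity
  have h1 : ∀ y ∈ Set.Icc (-1:ℝ) 1, c ≤ Real.exp (t₁ * y + t₂ * |y| ^ p) * fp p y := by
    intro y hy
    have hy1 : |y| ≤ 1 := abs_le.mpr ⟨hy.1, hy.2⟩
    have hA0 : 0 ≤ |y| ^ p := Real.rpow_nonneg (abs_nonneg y) p
    have hA1 : |y| ^ p ≤ 1 := Real.rpow_le_one (abs_nonneg y) hy1 hppos.le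
    have he1 : -(|t₁| + |t₂|) ≤ t₁ * y + t₂ * |y| ^ p := by
      have h1' : -|t₁| ≤ t₁ * y := by
        have : |t₁ * y| ≤ |t₁| := by
          rw [abs_mul]; exact mul_le_of_le_one_right (abs_nonneg _) hy1
        linarith [neg_abs_le (t₁ * y)]
      have h2' : -|t₂| ≤ t₂ * |y| ^ p := by
        have : |t₂ * |y| ^ p| ≤ |t₂| := by
          rw [abs_mul, abs_of_nonneg hA0]
          exact mul_le_of_le_one_right (abs_nonneg _) hA1
        linarith [neg_abs_le (t₂ * |y| ^ p)]
      linarith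
    have he2 : Real.exp (-(1/p)) / (2 * p ^ (1/p) * Real.Gamma (1 + 1/p)) ≤ fp p y := by
      unfold fp
      have hd : |y| ^ p / p ≤ 1 / p := (div_le_div_iff_of_pos_right hppos).mpr hA1
      refine (div_le_div_iff_of_pos_right hN).mpr (Real.exp_le_exp.mpr ?_)
      rw [neg_div]
      linarith
    rw [hc]
    exact mul_le_mul (Real.exp_le_exp.mpr he1) he2 (by positivity) (Real.exp_pos _).le
  have h2 : c * (volume (Set.Icc (-1:ℝ) 1)).toReal
      ≤ ∫ y in Set.Icc (-1:ℝ) 1, Real.exp (t₁ * y + t₂ * |y| ^ p) * fp p y :=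
    setIntegral_ge_of_const_le_real measurableSet_Icc (by simp) h1
      (integrable_integrand hp ht₂ t₁).integrableOn
  have h3 : (∫ y in Set.Icc (-1:ℝ) 1, Real.exp (t₁ * y + t₂ * |y| ^ p) * fp p y)
      ≤ ∫ y : ℝ, Real.exp (t₁ * y + t₂ * |y| ^ p) * fp p y :=
    setIntegral_le_integral (integrable_integrand hp ht₂ t₁)
      (Filter.Eventually.of_forall (fun y =>
        mul_nonneg (Real.exp_pos _).le (fp_pos hppos y).le))
  have hvol : (volume (Set.Icc (-1:ℝ) 1)).toReal = 2 := by
    rw [Real.volume_Icc]; norm_num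
  rw [hvol] at h2
  have hlog := Real.log_le_log (by positivity) (h2.trans h3)
  have heq : Real.log (c * 2)
      = Real.log (2 * Real.exp (-(1/p)) / (2 * p ^ (1/p) * Real.Gamma (1 + 1/p))) - |t₂| - |t₁| := by
    rw [hc, show Real.exp (-(|t₁| + |t₂|)) * (Real.exp (-(1/p)) / (2 * p ^ (1/p) * Real.Gamma (1 + 1/p))) * 2
        = Real.exp (-(|t₁| + |t₂|)) * (2 * Real.exp (-(1/p)) / (2 * p ^ (1/p) * Real.Gamma (1 + 1/p))) by ring,
      Real.log_mul (Real.exp_ne_zero _) (by positivity), Real.log_exp]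
    ring
  rw [heq] at hlog
  exact hlog

lemma Lambda_abs_bound {p : ℝ} (hp : 1 < p) {t₂ : ℝ} (ht₂ : t₂ < 1/p) :
    ∃ A B : ℝ, 0 ≤ B ∧ ∀ t₁ : ℝ,
      |Lambda p t₁ t₂| ≤ A + B * (|t₁| + |t₁| ^ (p/(p-1))) := by
  have hppos : (0:ℝ) < p := by linarith
  have hη : 0 < (1/p - t₂)/2 := by linarith
  have hq : 0 < p/(p-1) := div_pos hppos (by linarith)
  set δ : ℝ := (p * ((1/p - t₂)/2)) ^ (1/p) with hδ
  have hδpos : 0 < δ := Real.rpow_pos_of_pos (by positivity) _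
  set D : ℝ := (1/δ) ^ (p/(p-1)) / (p/(p-1)) with hD
  have hDpos : 0 < D := div_pos (Real.rpow_pos_of_pos (by positivity) _) hq
  set C₂ : ℝ := Real.log ((∫ y : ℝ, Real.exp (-((1/p - t₂)/2) * |y| ^ p))
      / (2 * p ^ (1/p) * Real.Gamma (1 + 1/p))) with hC₂
  set C₃ : ℝ := Real.log (2 * Real.exp (-(1/p)) / (2 * p ^ (1/p) * Real.Gamma (1 + 1/p))) - |t₂|
    with hC₃
  refine ⟨|C₂| + |C₃|, D + 1, by positivity, fun t₁ => ?_⟩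
  have hKeq : (|t₁| / δ) ^ (p/(p-1)) / (p/(p-1)) = D * |t₁| ^ (p/(p-1)) := by
    rw [hD, div_rpow (abs_nonneg _) hδpos.le, div_rpow (by norm_num) hδpos.le,
      Real.one_rpow]
    field_simp
  have hup := Lambda_upper hp ht₂ t₁
  rw [← hδ, ← hC₂, hKeq] at hup
  have hlow := Lambda_lower hp ht₂ t₁
  have hlow' : C₃ - |t₁| ≤ Lambda p t₁ t₂ := by rw [hC₃]; linarith
  have h1 : (0:ℝ) ≤ |t₁| := abs_nonneg _
  have h2 : (0:ℝ) ≤ |t₁| ^ (p/(p-1)) := Real.rpow_nonneg (abs_nonneg _) _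
  have := le_abs_self C₂; have := neg_abs_le C₃
  rw [abs_le]
  constructor <;>
    nlinarith [mul_nonneg hDpos.le h1, mul_nonneg hDpos.le h2, abs_nonneg C₂, abs_nonneg C₃]

lemma gauss_eq : gauss = fun u : ℝ => Real.exp (-(1/2) * u ^ 2) * (Real.sqrt (2 * Real.pi))⁻¹ := by
  funext u
  unfold gauss
  rw [div_eq_mul_inv, show -u ^ 2 / 2 = -(1/2) * u ^ 2 from by ring]

lemma gauss_nonneg (u : ℝ) : 0 ≤ gauss u := by
  unfold gauss; positivity

lemma gauss_continuous : Continuous gauss := by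
  unfold gauss
  exact ((continuous_pow 2).neg.div_const 2).rexp.div_const _

lemma integrable_gauss : Integrable gauss := by
  rw [gauss_eq]
  exact (integrable_exp_neg_mul_sq (by norm_num : (0:ℝ) < 1/2)).mul_const _

lemma integral_gauss : ∫ u : ℝ, gauss u = 1 := by
  rw [gauss_eq]
  rw [integral_mul_const, integral_gaussian]
  rw [show Real.pi / (1/2) = 2 * Real.pi from by ring]
  exact mul_inv_cancel₀ (Real.sqrt_ne_zero'.mpr (by positivity))

lemma integrable_abs_rpow_mul_gaussfn {q : ℝ} (hq : 0 ≤ q) :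
    Integrable fun u : ℝ => |u| ^ q * gauss u := by
  simp only [gauss_eq, ← mul_assoc]
  exact (integrable_abs_rpow_mul_gauss hq).mul_const _

lemma meas_Lambda {p : ℝ} (hp : 0 < p) (s₁ s₂ : ℝ) :
    Measurable fun u : ℝ => Lambda p (u * s₁) s₂ := by
  have hc : Continuous fun q : ℝ × ℝ =>
      Real.exp ((q.1 * s₁) * q.2 + s₂ * |q.2| ^ p) * fp p q.2 := by
    unfold fp
    exact (((continuous_fst.mul continuous_const).mul continuous_snd).add
        (continuous_const.mul ((cont_abs_rpow hp).comp continuous_snd))).rexp.mul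
      ((((cont_abs_rpow hp).comp continuous_snd).neg.div_const p).rexp.div_const _)
  have hsm : StronglyMeasurable fun u : ℝ =>
      ∫ y : ℝ, Real.exp ((u * s₁) * y + s₂ * |y| ^ p) * fp p y :=
    hc.stronglyMeasurable.integral_prod_right'
  exact Real.measurable_log.comp hsm.measurable

lemma integrable_Lambda_gauss {p : ℝ} (hp : 1 < p) {s₂ : ℝ} (ht₂ : s₂ < 1/p) (s₁ : ℝ) :
    Integrable fun u : ℝ => Lambda p (u * s₁) s₂ * gauss u := by
  obtain ⟨A, B, hB, hbound⟩ := Lambda_abs_bound hp ht₂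
  have hqpos : (0:ℝ) < p/(p-1) := div_pos (by linarith) (by linarith)
  have hint1 : Integrable fun u : ℝ => |u| * gauss u := by
    have h := integrable_abs_rpow_mul_gaussfn (by norm_num : (0:ℝ) ≤ 1)
    simpa [Real.rpow_one] using h
  have hintq : Integrable fun u : ℝ => |u| ^ (p/(p-1)) * gauss u :=
    integrable_abs_rpow_mul_gaussfn hqpos.le
  have hM : Integrable fun u : ℝ =>
      |A| * gauss u + B * |s₁| * (|u| * gauss u)
        + B * |s₁| ^ (p/(p-1)) * (|u| ^ (p/(p-1)) * gauss u) :=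
    ((integrable_gauss.const_mul _).add (hint1.const_mul _)).add (hintq.const_mul _)
  apply Integrable.mono' hM
    (((meas_Lambda (by linarith) s₁ s₂).mul gauss_continuous.measurable).aestronglyMeasurable)
  refine Filter.Eventually.of_forall (fun u => ?_)
  have hG : 0 ≤ gauss u := gauss_nonneg u
  have habs : |u * s₁| = |u| * |s₁| := abs_mul u s₁
  have habsq : |u * s₁| ^ (p/(p-1)) = |u| ^ (p/(p-1)) * |s₁| ^ (p/(p-1)) := by
    rw [habs, Real.mul_rpow (abs_nonneg u) (abs_nonneg s₁)]
  calc ‖Lambda p (u * s₁) s₂ * gauss u‖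
      = |Lambda p (u * s₁) s₂| * gauss u := by
        rw [Real.norm_eq_abs, abs_mul, abs_of_nonneg hG]
    _ ≤ (A + B * (|u * s₁| + |u * s₁| ^ (p/(p-1)))) * gauss u :=
        mul_le_mul_of_nonneg_right (hbound _) hG
    _ ≤ _ := by
        rw [habs, Real.mul_rpow (abs_nonneg u) (abs_nonneg s₁)]
        nlinarith [mul_nonneg (sub_nonneg.mpr (le_abs_self A)) hG,
          mul_nonneg (mul_nonneg hB (abs_nonneg s₁)) (mul_nonneg (abs_nonneg u) hG),
          mul_nonneg (mul_nonneg hB (Real.rpow_nonneg (abs_nonneg s₁) (p/(p-1))))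
            (mul_nonneg (Real.rpow_nonneg (abs_nonneg u) (p/(p-1))) hG)]

lemma Lambda_scal {p : ℝ} (hp : 1 < p) {t₂ : ℝ} (ht₂ : t₂ < 1/p) (t₁ : ℝ) {c : ℝ} (hc : 0 < c) :
    Lambda p (c * t₁) (c ^ p * t₂ - (c ^ p - 1)/p) = Lambda p t₁ t₂ - Real.log c := by
  have hp0 : p ≠ 0 := by positivity
  have hN : 0 < 2 * p ^ (1/p) * Real.Gamma (1 + 1/p) := Np_pos (by linarith)
  have key : ∀ z : ℝ, Real.exp ((c * t₁) * z + (c ^ p * t₂ - (c ^ p - 1)/p) * |z| ^ p) * fp p z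
      = Real.exp (t₁ * (c * z) + t₂ * |c * z| ^ p) * fp p (c * z) := by
    intro z
    unfold fp
    have hab : |c * z| ^ p = c ^ p * |z| ^ p := by
      rw [abs_mul, abs_of_pos hc, Real.mul_rpow hc.le (abs_nonneg z)]
    rw [hab]
    simp only [div_eq_mul_inv, ← mul_assoc, ← Real.exp_add]
    congr 1
    field_simp
    ring
  unfold Lambda
  have hint : (∫ z : ℝ, Real.exp ((c * t₁) * z + (c ^ p * t₂ - (c ^ p - 1)/p) * |z| ^ p) * fp p z)
      = c⁻¹ * ∫ y : ℝ, Real.exp (t₁ * y + t₂ * |y| ^ p) * fp p y := by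
    calc (∫ z : ℝ, Real.exp ((c * t₁) * z + (c ^ p * t₂ - (c ^ p - 1)/p) * |z| ^ p) * fp p z)
        = ∫ z : ℝ, Real.exp (t₁ * (c * z) + t₂ * |c * z| ^ p) * fp p (c * z) := by
          exact integral_congr_ae (Filter.Eventually.of_forall (fun z => key z))
      _ = |c⁻¹| • ∫ y : ℝ, Real.exp (t₁ * y + t₂ * |y| ^ p) * fp p y :=
          Measure.integral_comp_mul_left (fun y => Real.exp (t₁ * y + t₂ * |y| ^ p) * fp p y) c
      _ = c⁻¹ * ∫ y : ℝ, Real.exp (t₁ * y + t₂ * |y| ^ p) * fp p y := by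
          rw [abs_of_pos (inv_pos.mpr hc), smul_eq_mul]
  rw [hint, Real.log_mul (inv_ne_zero hc.ne') (Z_pos hp ht₂ t₁).ne', Real.log_inv]
  ring

lemma fderiv_pair (L : ℝ × ℝ →L[ℝ] ℝ) (a b : ℝ) : L (a, b) = a * L (1, 0) + b * L (0, 1) := by
  have h : (a, b) = a • ((1:ℝ), (0:ℝ)) + b • ((0:ℝ), (1:ℝ)) := by
    simp [Prod.ext_iff]
  rw [h, map_add, L.map_smul, L.map_smul, smul_eq_mul, smul_eq_mul]

lemma key_identity {p : ℝ} (hp : 1 < p) (Ψ : ℝ × ℝ → ℝ)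
    (hΨ : Ψ = fun s => ∫ u : ℝ, Lambda p (u * s.1) s.2 * gauss u)
    {a b : ℝ} (hb : b < 1/p) (hdiff : DifferentiableAt ℝ Ψ (a, b)) :
    fderiv ℝ Ψ (a, b) (a, p * b - 1) = -1 := by
  have hp0 : p ≠ 0 := by positivity
  have hfun : ∀ c : ℝ, 0 < c →
      Ψ (c * a, c ^ p * b - (c ^ p - 1)/p) = Ψ (a, b) - Real.log c := by
    intro c hc
    rw [hΨ]
    simp only
    have hpt : ∀ u : ℝ, Lambda p (u * (c * a)) (c ^ p * b - (c ^ p - 1)/p) * gauss u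
        = Lambda p (u * a) b * gauss u - Real.log c * gauss u := by
      intro u
      have h := Lambda_scal hp hb (u * a) hc
      rw [show u * (c * a) = c * (u * a) from by ring, h, sub_mul]
    rw [integral_congr_ae (Filter.Eventually.of_forall hpt),
      integral_sub (integrable_Lambda_gauss hp hb a) (integrable_gauss.const_mul _),
      integral_const_mul, integral_gauss, mul_one]
  set γ : ℝ → ℝ × ℝ := fun c => (c * a, c ^ p * b - (c ^ p - 1)/p) with hγ
  have hγ1 : γ 1 = (a, b) := by simp [hγ, Real.one_rpow]
  have hd1 : HasDerivAt (fun c : ℝ => c * a) a 1 := by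
    simpa using (hasDerivAt_id (1:ℝ)).mul_const a
  have hdp : HasDerivAt (fun c : ℝ => c ^ p) p 1 := by
    have h := Real.hasDerivAt_rpow_const (x := (1:ℝ)) (p := p) (Or.inl one_ne_zero)
    simpa using h
  have hd2 : HasDerivAt (fun c : ℝ => c ^ p * b - (c ^ p - 1)/p) (p * b - 1) 1 := by
    have h := (hdp.mul_const b).sub ((hdp.sub_const 1).div_const p)
    rwa [div_self hp0] at h
  have hγd : HasDerivAt γ (a, p * b - 1) 1 := hd1.prodMk hd2
  have hdiff' : DifferentiableAt ℝ Ψ (γ 1) := hγ1.symm ▸ hdiff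
  have hcomp : HasDerivAt (Ψ ∘ γ) (fderiv ℝ Ψ (γ 1) (a, p * b - 1)) 1 :=
    hdiff'.hasFDerivAt.comp_hasDerivAt 1 hγd
  have hev : (Ψ ∘ γ) =ᶠ[nhds 1] fun c => Ψ (a, b) - Real.log c := by
    filter_upwards [eventually_gt_nhds zero_lt_one] with c hc
    exact hfun c hc
  have hlog : HasDerivAt (fun c : ℝ => Ψ (a, b) - Real.log c) (-1) 1 := by
    simpa using (Real.hasDerivAt_log one_ne_zero).const_sub (Ψ (a, b))
  have hfin : fderiv ℝ Ψ (γ 1) (a, p * b - 1) = -1 :=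
    hcomp.unique (hlog.congr_of_eventuallyEq hev)
  rwa [hγ1] at hfin

theorem stmt10 (p t : ℝ) (hp : 1 < p)
    (Ψ : ℝ × ℝ → ℝ)
    (hΨ : Ψ = fun s => ∫ u : ℝ, Lambda p (u * s.1) s.2 * gauss u)
    (s₁ s₂ s₁' s₂' : ℝ → ℝ)
    (hdom : ∀ τ, 0 < τ → s₂ τ < 1/p)
    (hs₁ : ∀ τ, 0 < τ → HasDerivAt s₁ (s₁' τ) τ)
    (hs₂ : ∀ τ, 0 < τ → HasDerivAt s₂ (s₂' τ) τ)
    (hdiff : ∀ τ, 0 < τ → DifferentiableAt ℝ Ψ (s₁ τ, s₂ τ))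
    -- first order conditions: ∇Ψ_p(s₁(τ), s₂(τ)) = (τ t, τ^p)
    (hfoc1 : ∀ τ, 0 < τ → fderiv ℝ Ψ (s₁ τ, s₂ τ) (1, 0) = τ * t)
    (hfoc2 : ∀ τ, 0 < τ → fderiv ℝ Ψ (s₁ τ, s₂ τ) (0, 1) = τ ^ p)
    -- g τ = Ψ_p*(τ t, τ^p), the supremum being attained at (s₁(τ), s₂(τ))
    (g : ℝ → ℝ)
    (hg : g = fun τ => s₁ τ * (τ * t) + s₂ τ * τ ^ p - Ψ (s₁ τ, s₂ τ)) :
    (∀ τ : ℝ, 0 < τ → HasDerivAt g (τ ^ (p - 1) - 1 / τ) τ) ∧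
    (∀ τ : ℝ, 0 < τ → g 1 ≤ g τ) := by
  have hderiv : ∀ τ : ℝ, 0 < τ → HasDerivAt g (τ ^ (p - 1) - 1 / τ) τ := by
    intro τ hτ
    have ha := hs₁ τ hτ
    have hb := hs₂ τ hτ
    have hpair : HasDerivAt (fun x => (s₁ x, s₂ x)) (s₁' τ, s₂' τ) τ := ha.prodMk hb
    have hΨd : HasDerivAt (fun x => Ψ (s₁ x, s₂ x))
        (fderiv ℝ Ψ (s₁ τ, s₂ τ) (s₁' τ, s₂' τ)) τ :=
      (hdiff τ hτ).hasFDerivAt.comp_hasDerivAt τ hpair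
    have hrpow : HasDerivAt (fun x : ℝ => x ^ p) (p * τ ^ (p - 1)) τ :=
      Real.hasDerivAt_rpow_const (Or.inl hτ.ne')
    have h1 : HasDerivAt (fun x => s₁ x * (x * t)) (s₁' τ * (τ * t) + s₁ τ * t) τ := by
      have h := ha.mul ((hasDerivAt_id τ).mul_const t)
      refine h.congr_deriv ?_
      simp
    have h2 : HasDerivAt (fun x => s₂ x * x ^ p)
        (s₂' τ * τ ^ p + s₂ τ * (p * τ ^ (p - 1))) τ := hb.mul hrpow
    have hgd : HasDerivAt g
        (s₁' τ * (τ * t) + s₁ τ * t + (s₂' τ * τ ^ p + s₂ τ * (p * τ ^ (p - 1)))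
          - fderiv ℝ Ψ (s₁ τ, s₂ τ) (s₁' τ, s₂' τ)) τ := by
      rw [hg]; exact (h1.add h2).sub hΨd
    have hlin : fderiv ℝ Ψ (s₁ τ, s₂ τ) (s₁' τ, s₂' τ) = s₁' τ * (τ * t) + s₂' τ * τ ^ p := by
      rw [fderiv_pair, hfoc1 τ hτ, hfoc2 τ hτ]
    have hkey : s₁ τ * (τ * t) + (p * s₂ τ - 1) * τ ^ p = -1 := by
      have h := key_identity hp Ψ hΨ (hdom τ hτ) (hdiff τ hτ)
      rwa [fderiv_pair, hfoc1 τ hτ, hfoc2 τ hτ] at h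
    have hτp : τ ^ p = τ ^ (p - 1) * τ := by
      have h := Real.rpow_add_one hτ.ne' (p - 1)
      rwa [show p - 1 + 1 = p from by ring] at h
    rw [hτp] at hkey
    convert hgd using 1
    rw [hlin, hτp]
    field_simp
    linear_combination (-1 : ℝ) * hkey
  refine ⟨hderiv, ?_⟩
  intro τ hτ
  rcases le_total 1 τ with h1τ | hτ1
  · have hmono : MonotoneOn g (Set.Ici 1) := by
      apply monotoneOn_of_deriv_nonneg (convex_Ici 1)
      · intro x hx
        have hx0 : (0:ℝ) < x := lt_of_lt_of_le zero_lt_one hx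
        exact (hderiv x hx0).differentiableAt.continuousAt.continuousWithinAt
      · intro x hx
        rw [interior_Ici] at hx
        exact (hderiv x (lt_trans zero_lt_one hx)).differentiableAt.differentiableWithinAt
      · intro x hx
        rw [interior_Ici] at hx
        have hx1 : (1:ℝ) < x := hx
        have hx0 : (0:ℝ) < x := lt_trans zero_lt_one hx1
        rw [(hderiv x hx0).deriv]
        have hr : (1:ℝ) ≤ x ^ (p - 1) := Real.one_le_rpow hx1.le (by linarith)
        have hd : 1 / x ≤ 1 := by rw [div_le_one hx0]; linarith
        linarith
    exact hmono self_mem_Ici (Set.mem_Ici.mpr h1τ) h1τ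
  · have hanti : AntitoneOn g (Set.Ioc 0 1) := by
      apply antitoneOn_of_deriv_nonpos (convex_Ioc 0 1)
      · intro x hx
        exact (hderiv x hx.1).differentiableAt.continuousAt.continuousWithinAt
      · intro x hx
        rw [interior_Ioc] at hx
        exact (hderiv x hx.1).differentiableAt.differentiableWithinAt
      · intro x hx
        rw [interior_Ioc] at hx
        rw [(hderiv x hx.1).deriv]
        have hr : x ^ (p - 1) ≤ 1 := Real.rpow_le_one hx.1.le hx.2.le (by linarith)
        have hd : 1 ≤ 1 / x := by rw [le_div_iff₀ hx.1]; linarith [hx.2]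
        linarith
    exact hanti (Set.mem_Ioc.mpr ⟨hτ, hτ1⟩) (Set.mem_Ioc.mpr ⟨zero_lt_one, le_refl 1⟩) hτ1
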